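/- Let P, H be symmetric n×n matrices with P ≻ 0, H ≻ 0, and H ≺ α·P for α ∈ (0,1). Suppose a trajectory s(k) satisfies the reward nonnegativity condition sᵀ(k)·H·s(k) − sᵀ(k+1)·P·s(k+1) ≥ 0 for all k. Then sᵀ(k+1)·P·s(k+1) ≤ α·sᵀ(k)·P·s(k) for all k, and hence s(1) ∈ Ω implies s(k) ∈ Ω for all k. -/

import Mathlib

open Matrix

theorem subreward_nonneg_implies_invariance (n : ℕ)
    (P H : Matrix (Fin n) (Fin n) ℝ)
    (hP : P.PosDef) (hH : H.PosDef)
    (α : ℝ) (hα0 : 0 < α) (hα1 : α < 1)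
    (hHP : (α • P - H).PosDef)
    (s : ℕ → (Fin n → ℝ))
    (hreward : ∀ k : ℕ,
      0 ≤ (s k) ⬝ᵥ H.mulVec (s k) - (s (k + 1)) ⬝ᵥ P.mulVec (s (k + 1))) :
    (∀ k : ℕ, (s (k + 1)) ⬝ᵥ P.mulVec (s (k + 1)) ≤ α * ((s k) ⬝ᵥ P.mulVec (s k))) ∧
    ((s 1) ⬝ᵥ P.mulVec (s 1) ≤ 1 →
      ∀ k : ℕ, 1 ≤ k → (s k) ⬝ᵥ P.mulVec (s k) ≤ 1) := by
  have hHle : ∀ x : Fin n → ℝ, x ⬝ᵥ H.mulVec x ≤ α * (x ⬝ᵥ P.mulVec x) := by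
    intro x
    have := hHP.posSemidef.dotProduct_mulVec_nonneg x
    have heq : x ⬝ᵥ ((α • P - H)).mulVec x
        = α * (x ⬝ᵥ P.mulVec x) - x ⬝ᵥ H.mulVec x := by
      simp [sub_mulVec, smul_mulVec, dotProduct_sub, dotProduct_smul,
        smul_eq_mul]
    simp only [star_trivial] at this
    linarith [heq ▸ this]
  have hdec : ∀ k : ℕ, (s (k + 1)) ⬝ᵥ P.mulVec (s (k + 1))
      ≤ α * ((s k) ⬝ᵥ P.mulVec (s k)) := by
    intro k
    have h1 := hreward k
    have h2 := hHle (s k)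
    linarith
  refine ⟨hdec, fun h1 k hk => ?_⟩
  induction k with
  | zero => omega
  | succ m ih =>
    rcases Nat.eq_or_lt_of_le hk with h | h
    · simpa [← h] using h1
    · have hm : 1 ≤ m := by omega
      have := hdec m
      have hPm : (0:ℝ) ≤ (s m) ⬝ᵥ P.mulVec (s m) := by
        have := hP.posSemidef.dotProduct_mulVec_nonneg (s m)
        simpa using this
      have hαle : α * ((s m) ⬝ᵥ P.mulVec (s m)) ≤ (s m) ⬝ᵥ P.mulVec (s m) := by
        nlinarith
      have := ih hm
      linarith
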